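/- Let λ^Ā and μ^Ā be two solutions of the first-order system E^e_i(∂_e λ^Ā) + (i/2)q_i λ^Ā = 0 on a Bianchi 3-space (ī = 1,2,3; Ā = 0,1), and set ω := λ^Ā μ^B̄ ε_{ĀB̄}. Then q_i θ^i_e = i·∂_e(ln ω); in particular, if the system admits global nonvanishing solutions then the 1-form q_i θ^i is exact. -/

import Mathlib

open Complex Metric

abbrev V3 := Fin 3 → ℝ

open Complex Metric

private lemma lift_unique {X : Type*} [TopologicalSpace X] {S : Set X} (hS : IsPreconnected S)
    {x0 : X} (h0 : x0 ∈ S) {g1 g2 : X → ℂ} (h1 : ContinuousOn g1 S) (h2 : ContinuousOn g2 S)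
    (hexp : ∀ y ∈ S, Complex.exp (g1 y) = Complex.exp (g2 y)) (hb : g1 x0 = g2 x0)
    {y : X} (hy : y ∈ S) : g1 y = g2 y := by
  haveI : PreconnectedSpace S := Subtype.preconnectedSpace hS
  set f : S → ℂ := fun p => g1 p - g2 p with hf
  have hfc : Continuous f := (h1.restrict.sub h2.restrict)
  have hint : ∀ p : S, ∃ n : ℤ, f p = n * (2 * Real.pi * I) := by
    intro p
    rw [← Complex.exp_eq_one_iff]
    simp only [hf, Complex.exp_sub, hexp p.1 p.2, div_self (Complex.exp_ne_zero _)]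
  have hlc : IsLocallyConstant f := by
    rw [IsLocallyConstant.iff_exists_open]
    intro p
    refine ⟨f ⁻¹' Metric.ball (f p) 1, hfc.isOpen_preimage _ Metric.isOpen_ball,
      by simp [Metric.mem_ball], ?_⟩
    intro q hq
    obtain ⟨n, hn⟩ := hint q
    obtain ⟨m, hm⟩ := hint p
    simp only [Set.mem_preimage, Metric.mem_ball, dist_eq] at hq
    rw [hn, hm] at hq ⊢
    congr 1
    norm_cast
    by_contra hne
    have h1le : (1 : ℝ) ≤ |(n - m : ℤ)| := by
      exact_mod_cast Int.one_le_abs (sub_ne_zero.mpr hne)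
    have : ‖(n : ℂ) * (2 * Real.pi * I) - (m : ℂ) * (2 * Real.pi * I)‖ =
        |(n - m : ℤ)| * (2 * Real.pi) := by
      rw [← sub_mul]
      simp only [norm_mul, Complex.norm_I]
      rw [show ((n : ℂ) - m) = ((n - m : ℤ) : ℂ) by push_cast; ring]
      rw [Complex.norm_intCast]
      simp [abs_of_pos Real.pi_pos]
    rw [this] at hq
    nlinarith [Real.pi_gt_three, hq]
  have := hlc.apply_eq_of_preconnectedSpace ⟨y, hy⟩ ⟨x0, h0⟩
  simp only [hf, hb, sub_self] at this
  exact sub_eq_zero.mp (by simpa using this)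

private lemma lift_on_ball (Ω : V3 → ℂ) (hc : Continuous Ω) (h0 : ∀ x, Ω x ≠ 0) (n : ℕ) :
    ∃ g : V3 → ℂ, ContinuousOn g (closedBall 0 n) ∧ g 0 = Complex.log (Ω 0) ∧
      ∀ x ∈ closedBall 0 n, Complex.exp (g x) = Ω x := by
  set K : Set V3 := closedBall 0 n with hKdef
  have hK : IsCompact K := isCompact_closedBall _ _
  have h0K : (0 : V3) ∈ K := by simp [hKdef, Nat.cast_nonneg]
  -- minimum of ‖Ω‖ on K
  obtain ⟨z0, hz0K, hz0'⟩ := hK.exists_isMinOn ⟨0, h0K⟩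
    (continuous_norm.comp hc).continuousOn
  have hz0 : ∀ y ∈ K, ‖Ω z0‖ ≤ ‖Ω y‖ := fun y hy => hz0' hy
  set ε : ℝ := ‖Ω z0‖ with hε
  have hεpos : 0 < ε := by
    simpa [hε] using norm_pos_iff.mpr (h0 z0)
  -- uniform continuity
  obtain ⟨δ, hδpos, hδ⟩ := Metric.uniformContinuousOn_iff.mp
    (hK.uniformContinuousOn_of_continuous hc.continuousOn) ε hεpos
  -- choose N
  obtain ⟨N0, hN0⟩ := exists_nat_gt ((n : ℝ) / δ)
  set N : ℕ := N0 + 1 with hN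
  have hNpos : 0 < (N : ℝ) := by positivity
  have hnN : (n : ℝ) / N < δ := by
    rw [div_lt_iff₀ hNpos]
    have h1 : (n : ℝ) / δ < N := by
      calc (n : ℝ) / δ < N0 := hN0
        _ ≤ N := by exact_mod_cast Nat.le_succ N0
    calc (n : ℝ) = ((n : ℝ) / δ) * δ := by field_simp
      _ < (N : ℝ) * δ := by exact mul_lt_mul_of_pos_right h1 hδpos
      _ = δ * N := by ring
  -- membership of segment points
  have hmem : ∀ x ∈ K, ∀ t : ℝ, 0 ≤ t → t ≤ 1 → t • x ∈ K := by
    intro x hx t ht0 ht1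
    rw [hKdef, mem_closedBall_zero_iff] at hx ⊢
    calc ‖t • x‖ = |t| * ‖x‖ := by rw [norm_smul, Real.norm_eq_abs]
      _ ≤ 1 * ‖x‖ := by
          apply mul_le_mul_of_nonneg_right _ (norm_nonneg _)
          rwa [_root_.abs_of_nonneg ht0]
      _ = ‖x‖ := one_mul _
      _ ≤ n := hx
  have hfrac : ∀ k : ℕ, k ≤ N → (0:ℝ) ≤ (k : ℝ) / N ∧ (k : ℝ) / N ≤ 1 := by
    intro k hk
    constructor
    · positivity
    · rw [div_le_one hNpos]; exact_mod_cast hk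
  -- ratio estimates
  have hratio : ∀ x ∈ K, ∀ k : ℕ, k < N →
      Ω (((k + 1 : ℕ) / N : ℝ) • x) / Ω (((k : ℕ) / N : ℝ) • x) ∈ Metric.ball (1 : ℂ) 1 := by
    intro x hx k hk
    set a : V3 := (((k : ℕ) : ℝ) / N) • x
    set b : V3 := ((((k:ℕ) + 1 : ℕ) : ℝ) / N) • x
    have haK : a ∈ K := hmem x hx _ (hfrac k hk.le).1 (hfrac k hk.le).2
    have hbK : b ∈ K := hmem x hx _ (hfrac (k+1) hk).1 (hfrac (k+1) hk).2
    have hdist : dist b a < δ := by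
      have hba : dist b a = (1 / N) * ‖x‖ := by
        have : ((((k:ℕ) + 1 : ℕ) : ℝ) / N) - (((k : ℕ) : ℝ) / N) = 1 / N := by
          push_cast; ring
        simp only [a, b, dist_eq_norm, ← sub_smul, this, norm_smul, Real.norm_eq_abs]
        rw [_root_.abs_of_nonneg (by positivity)]
      have hxn : ‖x‖ ≤ (n : ℝ) := by rwa [hKdef, mem_closedBall_zero_iff] at hx
      calc dist b a = (1 / N) * ‖x‖ := hba
        _ ≤ (1 / N) * n := by
            apply mul_le_mul_of_nonneg_left hxn (by positivity)
        _ = (n : ℝ) / N := by ring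
        _ < δ := hnN
    have hΩd : dist (Ω b) (Ω a) < ε := hδ b hbK a haK hdist
    have habs : ε ≤ ‖Ω a‖ := hz0 a haK
    rw [Metric.mem_ball, Complex.dist_eq]
    have : Ω b / Ω a - 1 = (Ω b - Ω a) / Ω a := by
      field_simp [h0 a]
    rw [this, norm_div]
    rw [div_lt_one (by simpa using norm_pos_iff.mpr (h0 a))]
    calc ‖Ω b - Ω a‖ = dist (Ω b) (Ω a) := (Complex.dist_eq _ _).symm
      _ < ε := hΩd
      _ ≤ ‖Ω a‖ := habs
  -- the lift
  refine ⟨fun x => Complex.log (Ω 0) + ∑ k ∈ Finset.range N,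
      Complex.log (Ω ((((k + 1 : ℕ) : ℝ) / N) • x) / Ω ((((k : ℕ) : ℝ) / N) • x)), ?_, ?_, ?_⟩
  · apply continuousOn_const.add
    apply continuousOn_finset_sum
    intro k hk
    rw [Finset.mem_range] at hk
    apply ContinuousOn.clog
    · apply ContinuousOn.div
      · exact (hc.comp (continuous_const_smul _)).continuousOn
      · exact (hc.comp (continuous_const_smul _)).continuousOn
      · intro x hx; exact h0 _
    · intro x hx
      exact ball_one_subset_slitPlane (hratio x hx k hk)
  · simp [smul_zero, div_self (h0 0)]
  · intro x hx
    have key : ∀ m : ℕ, m ≤ N → Complex.exp (Complex.log (Ω 0) + ∑ k ∈ Finset.range m,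
        Complex.log (Ω ((((k + 1 : ℕ) : ℝ) / N) • x) / Ω ((((k : ℕ) : ℝ) / N) • x))) =
        Ω (((m : ℝ) / N) • x) := by
      intro m
      induction m with
      | zero => intro _; simp [Complex.exp_log (h0 0)]
      | succ m ih =>
        intro hm
        have hm' : m < N := hm
        rw [Finset.sum_range_succ, ← add_assoc, Complex.exp_add, ih hm'.le,
          Complex.exp_log (div_ne_zero (h0 _) (h0 _))]
        rw [mul_comm, div_mul_cancel₀ _ (h0 _)]
    have := key N le_rfl
    rwa [div_self hNpos.ne', one_smul] at this

private lemma lift_global (Ω : V3 → ℂ) (hc : Continuous Ω) (h0 : ∀ x, Ω x ≠ 0) :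
    ∃ g : V3 → ℂ, Continuous g ∧ ∀ x, Complex.exp (g x) = Ω x := by
  choose G hGc hG0 hGe using lift_on_ball Ω hc h0
  have hconsist : ∀ m n : ℕ, m ≤ n → ∀ y : V3, ‖y‖ ≤ m → G m y = G n y := by
    intro m n hmn y hy
    have hsub : closedBall (0 : V3) m ⊆ closedBall (0 : V3) n := by
      apply closedBall_subset_closedBall; exact_mod_cast hmn
    have hyK : y ∈ closedBall (0:V3) (m:ℝ) := by rwa [mem_closedBall_zero_iff]
    exact lift_unique (x0 := 0) ((convex_closedBall (0:V3) m).isPreconnected)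
      (by simp) (hGc m) ((hGc n).mono hsub)
      (fun z hz => by rw [hGe m z hz, hGe n z (hsub hz)])
      (by rw [hG0 m, hG0 n]) hyK
  set g : V3 → ℂ := fun x => G ⌈‖x‖⌉₊ x with hg
  have hgG : ∀ (x : V3) (n : ℕ), ‖x‖ ≤ n → g x = G n x := by
    intro x n hn
    rcases le_total ⌈‖x‖⌉₊ n with h | h
    · exact hconsist _ n h x (Nat.le_ceil _)
    · exact (hconsist n _ h x hn).symm
  refine ⟨g, ?_, ?_⟩
  · rw [continuous_iff_continuousAt]
    intro x0
    set n : ℕ := ⌈‖x0‖⌉₊ + 1 with hn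
    have hx0n : ‖x0‖ < n := by
      calc ‖x0‖ ≤ ⌈‖x0‖⌉₊ := Nat.le_ceil _
        _ < n := by exact_mod_cast Nat.lt_succ_self _
    have hGnc : ContinuousAt (G n) x0 := by
      apply (hGc n).continuousAt
      exact closedBall_mem_nhds_of_mem (by rwa [mem_ball_zero_iff])
    apply hGnc.congr
    have hball : Metric.ball x0 (n - ‖x0‖) ∈ nhds x0 :=
      Metric.ball_mem_nhds _ (by linarith)
    filter_upwards [hball] with y hy
    rw [mem_ball_iff_norm] at hy
    refine (hgG y n ?_).symm
    calc ‖y‖ = ‖(y - x0) + x0‖ := by ring_nf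
      _ ≤ ‖y - x0‖ + ‖x0‖ := norm_add_le _ _
      _ ≤ n := by linarith
  · intro x
    rw [hgG x ⌈‖x‖⌉₊ (Nat.le_ceil _)]
    exact hGe _ x (by rw [mem_closedBall_zero_iff]; exact Nat.le_ceil _)

private lemma exists_differentiable_log (Ω : V3 → ℂ) (hd : Differentiable ℝ Ω)
    (h0 : ∀ x, Ω x ≠ 0) :
    ∃ g : V3 → ℂ, Differentiable ℝ g ∧
      ∀ x v, fderiv ℝ g x v = fderiv ℝ Ω x v / Ω x := by
  obtain ⟨g, hgc, hge⟩ := lift_global Ω hd.continuous h0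
  have key : ∀ x : V3, HasFDerivAt g ((Ω x)⁻¹ • fderiv ℝ Ω x) x := by
    intro x
    -- local comparison function
    set u : V3 → ℂ := fun y => Ω y * (Ω x)⁻¹ with hu
    have hux : u x = 1 := mul_inv_cancel₀ (h0 x)
    have hud : HasFDerivAt u ((Ω x)⁻¹ • fderiv ℝ Ω x) x := by
      simpa [hu, smul_smul, mul_comm] using (hd x).hasFDerivAt.mul_const ((Ω x)⁻¹)
    set h : V3 → ℂ := fun y => g x + Complex.log (u y) with hh
    have hlog : HasFDerivAt Complex.log
        ((ContinuousLinearMap.smulRight (1 : ℂ →L[ℂ] ℂ) (1 : ℂ)⁻¹).restrictScalars ℝ) (u x) := by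
      rw [hux]
      exact ((Complex.hasDerivAt_log Complex.one_mem_slitPlane).hasFDerivAt).restrictScalars ℝ
    have hhd : HasFDerivAt h
        (((ContinuousLinearMap.smulRight (1 : ℂ →L[ℂ] ℂ) (1 : ℂ)⁻¹).restrictScalars ℝ).comp
          ((Ω x)⁻¹ • fderiv ℝ Ω x)) x :=
      (hlog.comp x hud).const_add (g x)
    -- g and h agree near x
    have hexp_eq : ∀ y : V3, Complex.exp (h y) = Complex.exp (g y) := by
      intro y
      rw [hh]
      simp only [Complex.exp_add, Complex.exp_log (mul_ne_zero (h0 y) (inv_ne_zero (h0 x)))]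
      rw [hge x, hge y]
      simp only [hu, Complex.exp_log (mul_ne_zero (h0 y) (inv_ne_zero (h0 x)))]
      rw [mul_comm (Ω y) (Ω x)⁻¹, ← mul_assoc, mul_inv_cancel₀ (h0 x), one_mul]
    have hUopen : IsOpen {y : V3 | u y ∈ Metric.ball (1:ℂ) 1} :=
      (Metric.isOpen_ball).preimage (by rw [hu]; exact hd.continuous.mul continuous_const)
    have hxU : x ∈ {y : V3 | u y ∈ Metric.ball (1:ℂ) 1} := by
      simp [hux]
    obtain ⟨r, hrpos, hrsub⟩ := Metric.isOpen_iff.mp hUopen x hxU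
    have heq : ∀ y ∈ Metric.ball x r, g y = h y := by
      intro y hy
      refine lift_unique (convex_ball x r).isPreconnected (Metric.mem_ball_self hrpos)
        (hgc.continuousOn) ?_ (fun z hz => (hexp_eq z).symm) ?_ hy
      · apply ContinuousOn.add continuousOn_const
        apply ContinuousOn.clog
        · exact ((hd.continuous.mul continuous_const).continuousOn)
        · intro z hz
          exact ball_one_subset_slitPlane (hrsub hz)
      · rw [hh]
        simp [hux]
    have heq' : g =ᶠ[nhds x] h := by
      filter_upwards [Metric.ball_mem_nhds x hrpos] with y hy using heq y hy
    have := hhd.congr_of_eventuallyEq heq'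
    -- identify the derivatives
    convert this using 1
    ext v
    simp
  refine ⟨g, fun x => (key x).differentiableAt, ?_⟩
  intro x v
  rw [(key x).fderiv]
  simp only [ContinuousLinearMap.smul_apply, smul_eq_mul]
  ring


/-- Let `λ^Ā` and `μ^Ā` be two solutions of the first-order system
`E^e_i ∂_e λ^Ā + (i/2) q_i λ^Ā = 0` on a Bianchi 3-space (modelled on a chart `ℝ³` with
a global frame `E_i` and dual coframe `θ^i`), and set `ω := λ^Ā μ^B̄ ε_{ĀB̄}`.  Then
`q_i θ^i_e = i·∂_e(ln ω)`; in particular, if the system admits global nonvanishing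
solutions then the 1-form `q_i θ^i` is exact. -/
theorem stmt_12
    (E : Fin 3 → (Fin 3 → ℝ) → (Fin 3 → ℝ))
    (θ : Fin 3 → (Fin 3 → ℝ) → ((Fin 3 → ℝ) →L[ℝ] ℝ))
    (hdual : ∀ x i j, θ i x (E j x) = if i = j then 1 else 0)
    (hspan : ∀ x v, v = ∑ i, θ i x v • E i x)
    (q : Fin 3 → ℝ)
    (lam mu : (Fin 3 → ℝ) → Fin 2 → ℂ)
    (hlam : ∀ Ab, Differentiable ℝ fun x => lam x Ab)
    (hmu : ∀ Ab, Differentiable ℝ fun x => mu x Ab)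
    (heq1 : ∀ x i Ab,
      fderiv ℝ (fun y => lam y Ab) x (E i x) + (Complex.I / 2) * (q i) * lam x Ab = 0)
    (heq2 : ∀ x i Ab,
      fderiv ℝ (fun y => mu y Ab) x (E i x) + (Complex.I / 2) * (q i) * mu x Ab = 0)
    (hω : ∀ x, lam x 0 * mu x 1 - lam x 1 * mu x 0 ≠ 0) :
    (∀ x v, (((∑ i, q i * θ i x v : ℝ)) : ℂ) =
        Complex.I * (fderiv ℝ (fun y => lam y 0 * mu y 1 - lam y 1 * mu y 0) x v) /
          (lam x 0 * mu x 1 - lam x 1 * mu x 0)) ∧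
    ∃ f : (Fin 3 → ℝ) → ℂ, Differentiable ℝ f ∧
      ∀ x v, (((∑ i, q i * θ i x v : ℝ)) : ℂ) = fderiv ℝ f x v := by
  set ω : (Fin 3 → ℝ) → ℂ := fun y => lam y 0 * mu y 1 - lam y 1 * mu y 0 with hωdef
  have hωdiff : Differentiable ℝ ω := ((hlam 0).mul (hmu 1)).sub ((hlam 1).mul (hmu 0))
  have hωd : ∀ x, fderiv ℝ ω x = (lam x 0 • fderiv ℝ (fun y => mu y 1) x +
      mu x 1 • fderiv ℝ (fun y => lam y 0) x) -
      (lam x 1 • fderiv ℝ (fun y => mu y 0) x + mu x 0 • fderiv ℝ (fun y => lam y 1) x) := by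
    intro x
    rw [hωdef]
    rw [fderiv_fun_sub (((hlam 0) x).fun_mul ((hmu 1) x)) (((hlam 1) x).fun_mul ((hmu 0) x)),
      fderiv_fun_mul ((hlam 0) x) ((hmu 1) x), fderiv_fun_mul ((hlam 1) x) ((hmu 0) x)]
  have hE : ∀ x i, fderiv ℝ ω x (E i x) =
      -Complex.I * q i * (lam x 0 * mu x 1 - lam x 1 * mu x 0) := by
    intro x i
    rw [hωd x]
    simp only [ContinuousLinearMap.sub_apply, ContinuousLinearMap.add_apply,
      ContinuousLinearMap.smul_apply, smul_eq_mul]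
    linear_combination (lam x 0) * heq2 x i 1 + (mu x 1) * heq1 x i 0 -
      (lam x 1) * heq2 x i 0 - (mu x 0) * heq1 x i 1
  have hv : ∀ x v, fderiv ℝ ω x v =
      -Complex.I * (∑ i, ((q i * θ i x v : ℝ) : ℂ)) *
        (lam x 0 * mu x 1 - lam x 1 * mu x 0) := by
    intro x v
    conv_lhs => rw [hspan x v]
    rw [map_sum]
    simp only [map_smul, hE]
    rw [show (-Complex.I * (∑ i, ((q i * θ i x v : ℝ) : ℂ)) *
        (lam x 0 * mu x 1 - lam x 1 * mu x 0)) =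
        ∑ i, (-Complex.I * ((q i * θ i x v : ℝ) : ℂ) *
          (lam x 0 * mu x 1 - lam x 1 * mu x 0)) by
      rw [Finset.mul_sum, Finset.sum_mul]]
    refine Finset.sum_congr rfl fun i _ => ?_
    rw [Complex.real_smul]
    push_cast
    ring
  have part1 : ∀ x v, (((∑ i, q i * θ i x v : ℝ)) : ℂ) =
      Complex.I * (fderiv ℝ ω x v) / (lam x 0 * mu x 1 - lam x 1 * mu x 0) := by
    intro x v
    rw [hv x v, eq_div_iff (hω x)]
    push_cast
    linear_combination (∑ i, ((q i : ℂ) * ((θ i x v : ℝ) : ℂ))) *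
      (lam x 0 * mu x 1 - lam x 1 * mu x 0) * Complex.I_sq
  refine ⟨part1, ?_⟩
  obtain ⟨g, hgdiff, hgder⟩ := exists_differentiable_log ω hωdiff hω
  refine ⟨fun y => Complex.I * g y, hgdiff.const_mul _, ?_⟩
  intro x v
  rw [fderiv_const_mul (hgdiff x) Complex.I, ContinuousLinearMap.smul_apply, smul_eq_mul,
    hgder x v, part1 x v, mul_div_assoc]
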